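/- Let F : ℝ^d → ℝ^d be a lift of a homeomorphism f of the d-torus homotopic to the identity. For any U ⊆ T^d, the rotation subset ρ_U(F) is compact; moreover, if U is connected then ρ_U(F) is connected. -/

import Mathlib

noncomputable section
open Filter Topology Metric Set MeasureTheory

/-- Euclidean space `ℝ^d`. -/
abbrev E (d : ℕ) := EuclideanSpace ℝ (Fin d)

/-- The integer lattice `ℤ^d` as an additive subgroup of `ℝ^d`. -/
def ZLat (d : ℕ) : AddSubgroup (E d) where
  carrier := {z | ∀ i, ∃ m : ℤ, z i = (m : ℝ)}
  zero_mem' := fun i => ⟨0, by simp⟩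
  add_mem' := by
    intro x y hx hy i
    obtain ⟨m, hm⟩ := hx i
    obtain ⟨n, hn⟩ := hy i
    exact ⟨m + n, by simp [PiLp.add_apply, hm, hn]⟩
  neg_mem' := by
    intro x hx i
    obtain ⟨m, hm⟩ := hx i
    exact ⟨-m, by simp [PiLp.neg_apply, hm]⟩

/-- The torus `T^d = ℝ^d / ℤ^d`. -/
abbrev T (d : ℕ) := E d ⧸ ZLat d

/-- The canonical projection `π : ℝ^d → T^d`. -/
def tpi (d : ℕ) : E d → T d := QuotientAddGroup.mk

/-- The set of rotation vectors of orbit segments starting in `W ⊆ ℝ^d`: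
`{ρ | ∃ nᵢ → ∞, zᵢ ∈ W, (F^{nᵢ}(zᵢ) - zᵢ)/nᵢ → ρ}`. -/
def rotRel {d : ℕ} (F : E d → E d) (W : Set (E d)) : Set (E d) :=
  {ρ | ∃ (n : ℕ → ℕ) (z : ℕ → E d),
    Tendsto n atTop atTop ∧ (∀ i, z i ∈ W) ∧
    Tendsto (fun i => (n i : ℝ)⁻¹ • (F^[n i] (z i) - z i)) atTop (𝓝 ρ)}

/-- The Misiurewicz–Ziemian rotation set `ρ(F)` of a lift `F`. -/
def rotSet {d : ℕ} (F : E d → E d) : Set (E d) := rotRel F Set.univ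

/-- The rotation subset `ρ_U(F)` for `U ⊆ T^d` (starting points in `π⁻¹(U)`). -/
def rotU {d : ℕ} (F : E d → E d) (U : Set (T d)) : Set (E d) :=
  rotRel F (tpi d ⁻¹' U)

/-- `F` is a lift of the torus homeomorphism `f` (which is then homotopic to the
identity, as expressed by commutation with the deck translations). -/
def IsLift {d : ℕ} (F : E d ≃ₜ E d) (f : T d ≃ₜ T d) : Prop :=
  (∀ z : E d, tpi d (F z) = f (tpi d z)) ∧ ∀ z : E d, ∀ m ∈ ZLat d, F (z + m) = F z + m

/-- `U ⊆ T^d` is bounded: the connected components of `π⁻¹(U)` are bounded. -/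
def BoundedSet {d : ℕ} (U : Set (T d)) : Prop :=
  ∀ z ∈ tpi d ⁻¹' U, Bornology.IsBounded (connectedComponentIn (tpi d ⁻¹' U) z)

/-- `U ⊆ T^d` is recurrent: `f^n(U) ∩ U ≠ ∅` for infinitely many `n ≥ 1`. -/
def Recurrent {d : ℕ} (f : T d ≃ₜ T d) (U : Set (T d)) : Prop :=
  {n : ℕ | 1 ≤ n ∧ ((⇑f)^[n] '' U ∩ U).Nonempty}.Infinite

/-! ### Auxiliary material -/

/-- Nested intersections of compact preconnected sets are preconnected. -/
theorem isPreconnected_iInter_of_nested {X : Type*} [TopologicalSpace X] [T2Space X]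
    {K : ℕ → Set X} (hc : ∀ n, IsCompact (K n)) (hconn : ∀ n, IsPreconnected (K n))
    (hnest : ∀ n, K (n + 1) ⊆ K n) : IsPreconnected (⋂ n, K n) := by
  set S := ⋂ n, K n with hS
  rintro u v hu hv hsub ⟨a, haS, hau⟩ ⟨b, hbS, hbv⟩
  by_contra hne
  rw [Set.not_nonempty_iff_eq_empty] at hne
  have hSclosed : IsClosed S := isClosed_iInter fun n => (hc n).isClosed
  have hScompact : IsCompact S := (hc 0).of_isClosed_subset hSclosed (Set.iInter_subset K 0)
  set A := S \ v with hA
  set B := S \ u with hB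
  have hAu : A ⊆ u := fun x hx => (hsub hx.1).resolve_right hx.2
  have hBv : B ⊆ v := fun x hx => (hsub hx.1).resolve_left hx.2
  have hABdisj : Disjoint A B := by
    rw [Set.disjoint_left]
    intro x hxA hxB
    exact hxB.2 (hAu hxA)
  obtain ⟨u', v', hu', hv', hAu', hBv', huv'⟩ :=
    SeparatedNhds.of_isCompact_isCompact (hScompact.diff hv) (hScompact.diff hu) hABdisj
  have hmemuv : ∀ x ∈ S, x ∈ u → x ∉ v := by
    intro x hxS hxu hxv
    have : x ∈ S ∩ (u ∩ v) := ⟨hxS, hxu, hxv⟩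
    rw [hne] at this
    exact this
  have hcover : ∀ x ∈ S, x ∈ u' ∪ v' := by
    intro x hx
    by_cases hxu : x ∈ u
    · exact Or.inl (hAu' ⟨hx, hmemuv x hx hxu⟩)
    · exact Or.inr (hBv' ⟨hx, hxu⟩)
  have hex : ∃ N, K N ⊆ u' ∪ v' := by
    by_contra h
    push_neg at h
    have hne' : ∀ N, (K N \ (u' ∪ v')).Nonempty := fun N => Set.diff_nonempty.2 (h N)
    obtain ⟨x, hx⟩ := IsCompact.nonempty_iInter_of_sequence_nonempty_isCompact_isClosed
      (fun N => K N \ (u' ∪ v')) (fun N => Set.diff_subset_diff_left (hnest N)) hne'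
      ((hc 0).diff (hu'.union hv')) (fun N => (hc N).isClosed.sdiff (hu'.union hv'))
    simp only [Set.mem_iInter, Set.mem_diff] at hx
    exact (hx 0).2 (hcover x (Set.mem_iInter.2 fun n => (hx n).1))
  obtain ⟨N, hN⟩ := hex
  have ha' : a ∈ u' := hAu' ⟨haS, hmemuv a haS hau⟩
  have hb' : b ∈ v' := hBv' ⟨hbS, fun hbu => hmemuv b hbS hbu hbv⟩
  obtain ⟨x, -, hx⟩ := hconn N u' v' hu' hv' hN
    ⟨a, Set.mem_iInter.1 haS N, ha'⟩ ⟨b, Set.mem_iInter.1 hbS N, hb'⟩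
  exact Set.disjoint_left.1 huv' hx.1 hx.2

/-- One step of the displacement of the `n`-th iterate, renormalized. -/
def Gm {d : ℕ} (F : E d → E d) (n : ℕ) (z : E d) : E d := (n : ℝ)⁻¹ • (F^[n] z - z)

theorem iterate_lift {d : ℕ} (F : E d ≃ₜ E d)
    (hF : ∀ z : E d, ∀ m ∈ ZLat d, F (z + m) = F z + m) (n : ℕ) (z m : E d)
    (hm : m ∈ ZLat d) : (⇑F)^[n] (z + m) = (⇑F)^[n] z + m := by
  induction n with
  | zero => simp
  | succ k ih =>
      rw [Function.iterate_succ_apply', Function.iterate_succ_apply', ih, hF _ m hm]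

theorem exists_disp_bound {d : ℕ} (F : E d ≃ₜ E d)
    (hF : ∀ z : E d, ∀ m ∈ ZLat d, F (z + m) = F z + m) :
    ∃ C : ℝ, 0 ≤ C ∧ ∀ z : E d, ‖F z - z‖ ≤ C := by
  set h : E d ≃ₜ ∀ _ : Fin d, ℝ :=
    (PiLp.continuousLinearEquiv 2 ℝ (fun _ : Fin d => ℝ)).toHomeomorph with hh
  set K : Set (E d) := h ⁻¹' Set.univ.pi fun _ : Fin d => Set.Icc (0 : ℝ) 1 with hKdef
  have hKc : IsCompact K := h.isCompact_preimage.2 (isCompact_univ_pi fun _ => isCompact_Icc)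
  have hcont : Continuous fun z : E d => F z - z := F.continuous.sub continuous_id
  obtain ⟨r, hr⟩ := (hKc.image hcont).isBounded.subset_closedBall 0
  refine ⟨max r 0, le_max_right _ _, fun z => ?_⟩
  set m : E d := (WithLp.equiv 2 (∀ _ : Fin d, ℝ)).symm (fun i => (⌊z i⌋ : ℝ)) with hm
  have hmi : ∀ i, m i = (⌊z i⌋ : ℝ) := fun i => rfl
  have hmZ : m ∈ ZLat d := fun i => ⟨⌊z i⌋, hmi i⟩
  have hzm : z - m ∈ K := by
    intro i _
    show (z - m) i ∈ Set.Icc (0 : ℝ) 1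
    have h2 : (z - m) i = z i - (⌊z i⌋ : ℝ) := by
      rw [PiLp.sub_apply, hmi]
    rw [h2]
    constructor
    · simp [Int.floor_le]
    · have := (Int.lt_floor_add_one (z i)).le
      linarith
  have key : F z - z = F (z - m) - (z - m) := by
    have h1 := hF (z - m) m hmZ
    rw [sub_add_cancel] at h1
    rw [h1]; abel
  have hmem : F (z - m) - (z - m) ∈ Metric.closedBall (0 : E d) r :=
    hr ⟨z - m, hzm, rfl⟩
  rw [key]
  have := mem_closedBall_zero_iff.1 hmem
  exact this.trans (le_max_left _ _)

theorem iterate_disp_bound {d : ℕ} (F : E d ≃ₜ E d) {C : ℝ}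
    (hC : ∀ z : E d, ‖F z - z‖ ≤ C) (n : ℕ) (z : E d) :
    ‖(⇑F)^[n] z - z‖ ≤ n * C := by
  induction n with
  | zero => simp
  | succ k ih =>
      have h1 : (⇑F)^[k + 1] z - z
          = (F ((⇑F)^[k] z) - (⇑F)^[k] z) + ((⇑F)^[k] z - z) := by
        rw [Function.iterate_succ_apply']; abel
      rw [h1]
      calc ‖_ + _‖ ≤ ‖F ((⇑F)^[k] z) - (⇑F)^[k] z‖ + ‖(⇑F)^[k] z - z‖ := norm_add_le _ _
        _ ≤ C + k * C := add_le_add (hC _) ih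
        _ = (k + 1 : ℕ) * C := by push_cast; ring

theorem Gm_norm_le {d : ℕ} (F : E d ≃ₜ E d) {C : ℝ}
    (hC : ∀ z : E d, ‖F z - z‖ ≤ C) {n : ℕ} (hn : 1 ≤ n) (z : E d) :
    ‖Gm (⇑F) n z‖ ≤ C := by
  have hx : (0 : ℝ) < n := by exact_mod_cast hn
  rw [Gm, norm_smul, Real.norm_eq_abs, abs_of_pos (by positivity)]
  calc (n : ℝ)⁻¹ * ‖(⇑F)^[n] z - z‖ ≤ (n : ℝ)⁻¹ * (n * C) := by
        gcongr
        exact iterate_disp_bound F hC n z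
    _ = C := by field_simp

theorem Gm_diff_bound {d : ℕ} (F : E d ≃ₜ E d) {C : ℝ} (hC0 : 0 ≤ C)
    (hC : ∀ z : E d, ‖F z - z‖ ≤ C) {n : ℕ} (hn : 1 ≤ n) (z : E d) :
    ‖Gm (⇑F) (n + 1) z - Gm (⇑F) n z‖ ≤ 2 * C / n := by
  have hx : (0 : ℝ) < n := by exact_mod_cast hn
  have hx1 : (0 : ℝ) < (n : ℝ) + 1 := by linarith
  set a := (⇑F)^[n] z - z with ha
  set b := F ((⇑F)^[n] z) - (⇑F)^[n] z with hb
  have hab : (⇑F)^[n + 1] z - z = a + b := by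
    rw [Function.iterate_succ_apply', ha, hb]; abel
  have heq : Gm (⇑F) (n + 1) z - Gm (⇑F) n z
      = ((n : ℝ) + 1)⁻¹ • b + (((n : ℝ) + 1)⁻¹ - (n : ℝ)⁻¹) • a := by
    simp only [Gm, hab]
    push_cast
    module
  have hban : ‖b‖ ≤ C := hC _
  have haan : ‖a‖ ≤ n * C := iterate_disp_bound F hC n z
  have habs : |((n : ℝ) + 1)⁻¹ - (n : ℝ)⁻¹| = (n : ℝ)⁻¹ - ((n : ℝ) + 1)⁻¹ := by
    rw [abs_sub_comm, abs_of_nonneg]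
    have : ((n : ℝ) + 1)⁻¹ ≤ (n : ℝ)⁻¹ := by
      apply inv_anti₀ hx; linarith
    linarith
  have hinv : (0 : ℝ) ≤ (n : ℝ)⁻¹ - ((n : ℝ) + 1)⁻¹ := by
    rw [← habs]; exact abs_nonneg _
  rw [heq]
  calc ‖_ + _‖ ≤ ‖((n : ℝ) + 1)⁻¹ • b‖ + ‖(((n : ℝ) + 1)⁻¹ - (n : ℝ)⁻¹) • a‖ :=
        norm_add_le _ _
    _ = ((n : ℝ) + 1)⁻¹ * ‖b‖ + ((n : ℝ)⁻¹ - ((n : ℝ) + 1)⁻¹) * ‖a‖ := by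
        rw [norm_smul, norm_smul, Real.norm_eq_abs, Real.norm_eq_abs,
          abs_of_pos (by positivity), habs]
    _ ≤ ((n : ℝ) + 1)⁻¹ * C + ((n : ℝ)⁻¹ - ((n : ℝ) + 1)⁻¹) * (n * C) := by
        gcongr
    _ = 2 * C / ((n : ℝ) + 1) := by field_simp; ring
    _ ≤ 2 * C / n := by
        apply div_le_div_of_nonneg_left (by linarith) hx (by linarith)

/-- The renormalized displacement of the `n`-th iterate descends to the torus. -/
def gmap {d : ℕ} (F : E d ≃ₜ E d)
    (hF : ∀ z : E d, ∀ m ∈ ZLat d, F (z + m) = F z + m) (n : ℕ) : T d → E d :=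
  fun u => Quotient.liftOn' u (Gm (⇑F) n) (by
    intro x y hxy
    have hm : -x + y ∈ ZLat d := QuotientAddGroup.leftRel_apply.1 hxy
    have hy : y = x + (-x + y) := by abel
    rw [hy, Gm, Gm, iterate_lift F hF n x _ hm]
    congr 1
    abel)

theorem gmap_mk {d : ℕ} (F : E d ≃ₜ E d)
    (hF : ∀ z : E d, ∀ m ∈ ZLat d, F (z + m) = F z + m) (n : ℕ) (z : E d) :
    gmap F hF n (tpi d z) = Gm (⇑F) n z := rfl

theorem gmap_continuous {d : ℕ} (F : E d ≃ₜ E d)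
    (hF : ∀ z : E d, ∀ m ∈ ZLat d, F (z + m) = F z + m) (n : ℕ) :
    Continuous (gmap F hF n) :=
  Continuous.quotient_liftOn'
    (show Continuous (Gm (⇑F) n) by
      unfold Gm; exact ((F.continuous.iterate n).sub continuous_id).const_smul ((n : ℝ)⁻¹)) _

/-- The rotation set as a nested intersection of closures. -/
theorem rotRel_eq_iInter {d : ℕ} (F : E d ≃ₜ E d) (W : Set (E d)) :
    rotRel (⇑F) W = ⋂ N : ℕ, closure (⋃ n ∈ Set.Ici N, Gm (⇑F) n '' W) := by
  apply Set.Subset.antisymm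
  · rintro ρ ⟨n, z, hn, hz, hlim⟩
    refine Set.mem_iInter.2 fun N => ?_
    refine mem_closure_of_tendsto hlim ?_
    filter_upwards [hn.eventually_ge_atTop N] with i hi
    exact Set.mem_biUnion hi ⟨z i, hz i, rfl⟩
  · intro ρ hρ
    have hsel : ∀ i : ℕ, ∃ p : ℕ × E d, (i + 1 ≤ p.1) ∧ p.2 ∈ W ∧
        dist ρ (Gm (⇑F) p.1 p.2) < 1 / ((i : ℝ) + 1) := by
      intro i
      have h1 := Set.mem_iInter.1 hρ (i + 1)
      rcases Metric.mem_closure_iff.1 h1 (1 / ((i : ℝ) + 1)) (by positivity) with ⟨y, hy, hdy⟩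
      simp only [Set.mem_iUnion, Set.mem_image, Set.mem_Ici] at hy
      obtain ⟨n, hn, z, hzW, rfl⟩ := hy
      exact ⟨⟨n, z⟩, hn, hzW, hdy⟩
    choose p hp1 hp2 hp3 using hsel
    refine ⟨fun i => (p i).1, fun i => (p i).2,
      tendsto_atTop_mono (fun i => (Nat.le_succ i).trans (hp1 i)) tendsto_id, hp2, ?_⟩
    rw [tendsto_iff_dist_tendsto_zero]
    refine squeeze_zero (fun i => dist_nonneg) (fun i => ?_) tendsto_one_div_add_atTop_nhds_zero_nat
    rw [dist_comm]
    exact (hp3 i).le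

/-- **Lemma (compactness and connectedness of rotation subsets).**
For any `U ⊆ T^d` the rotation subset `ρ_U(F)` is compact, and if `U` is connected
then so is `ρ_U(F)`. -/
theorem rotU_compact_and_connected
    {d : ℕ} (F : E d ≃ₜ E d) (f : T d ≃ₜ T d) (hlift : IsLift F f)
    (U : Set (T d)) :
    IsCompact (rotU (⇑F) U) ∧ (IsConnected U → IsConnected (rotU (⇑F) U)) := by
  obtain ⟨C, hC0, hC⟩ := exists_disp_bound F hlift.2
  set W : Set (E d) := tpi d ⁻¹' U with hW
  have hA : rotU (⇑F) U = ⋂ N : ℕ, closure (⋃ n ∈ Set.Ici N, Gm (⇑F) n '' W) :=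
    rotRel_eq_iInter F W
  -- Compactness
  have hDball : ∀ N : ℕ, 1 ≤ N →
      (⋃ n ∈ Set.Ici N, Gm (⇑F) n '' W) ⊆ Metric.closedBall (0 : E d) C := by
    rintro N hN x hx
    simp only [Set.mem_iUnion, Set.mem_image, Set.mem_Ici] at hx
    obtain ⟨n, hn, z, -, rfl⟩ := hx
    exact mem_closedBall_zero_iff.2 (Gm_norm_le F hC (hN.trans hn) z)
  have hsubball : rotU (⇑F) U ⊆ Metric.closedBall (0 : E d) C := by
    rw [hA]
    refine (Set.iInter_subset _ 1).trans ?_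
    exact closure_minimal (hDball 1 le_rfl) Metric.isClosed_closedBall
  have hclosed : IsClosed (rotU (⇑F) U) := by
    rw [hA]; exact isClosed_iInter fun N => isClosed_closure
  have hcomp : IsCompact (rotU (⇑F) U) :=
    (isCompact_closedBall 0 C).of_isClosed_subset hclosed hsubball
  refine ⟨hcomp, fun hU => ?_⟩
  -- Connectedness
  obtain ⟨u₀, hu₀⟩ := hU.nonempty
  set g : ℕ → T d → E d := gmap F hlift.2 with hg
  have hgc : ∀ n, Continuous (g n) := gmap_continuous F hlift.2
  have hg_norm : ∀ n : ℕ, 1 ≤ n → ∀ u : T d, ‖g n u‖ ≤ C := by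
    intro n hn u
    obtain ⟨z, rfl⟩ := QuotientAddGroup.mk_surjective u
    exact Gm_norm_le F hC hn z
  set q : ℕ → T d × ℝ → E d :=
    fun n p => (1 - p.2) • g n p.1 + p.2 • g (n + 1) p.1 with hq
  have hqc : ∀ n, Continuous (q n) := fun n =>
    ((continuous_const.sub continuous_snd).smul ((hgc n).comp continuous_fst)).add
      (continuous_snd.smul ((hgc (n + 1)).comp continuous_fst))
  set L : ℕ → Set (E d) := fun n => q n '' (U ×ˢ Set.Icc (0 : ℝ) 1) with hL
  have hq0 : ∀ n u, q n (u, 0) = g n u := by intro n u; simp [hq]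
  have hq1 : ∀ n u, q n (u, 1) = g (n + 1) u := by intro n u; simp [hq]
  have hLconn : ∀ n, IsConnected (L n) := fun n =>
    (hU.prod (isConnected_Icc zero_le_one)).image _ (hqc n).continuousOn
  have hLball : ∀ n : ℕ, 1 ≤ n → L n ⊆ Metric.closedBall (0 : E d) C := by
    rintro n hn x ⟨⟨u, t⟩, ⟨huU, ht0, ht1⟩, rfl⟩
    rw [mem_closedBall_zero_iff]
    have h1 : ‖g n u‖ ≤ C := hg_norm n hn u
    have h2 : ‖g (n + 1) u‖ ≤ C := hg_norm (n + 1) (by omega) u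
    calc ‖(1 - t) • g n u + t • g (n + 1) u‖
        ≤ ‖(1 - t) • g n u‖ + ‖t • g (n + 1) u‖ := norm_add_le _ _
      _ = (1 - t) * ‖g n u‖ + t * ‖g (n + 1) u‖ := by
          rw [norm_smul, norm_smul, Real.norm_eq_abs, Real.norm_eq_abs,
            abs_of_nonneg (by linarith), abs_of_nonneg ht0]
      _ ≤ (1 - t) * C + t * C := by gcongr <;> linarith
      _ = C := by ring
  set K : ℕ → Set (E d) := fun N => closure (⋃ k, L (N + 1 + k)) with hK
  have hKnested : ∀ N, K (N + 1) ⊆ K N := by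
    intro N
    refine closure_mono (Set.iUnion_subset fun k => ?_)
    refine Set.subset_iUnion_of_subset (k + 1) ?_
    exact (congrArg L (by omega : N + 1 + 1 + k = N + 1 + (k + 1))).subset
  have hKcompact : ∀ N, IsCompact (K N) := fun N =>
    (isCompact_closedBall 0 C).of_isClosed_subset isClosed_closure
      (closure_minimal (Set.iUnion_subset fun k => hLball _ (by omega))
        Metric.isClosed_closedBall)
  have hKconn : ∀ N, IsConnected (K N) := by
    intro N
    refine IsConnected.closure ?_
    refine IsConnected.iUnion_of_chain (fun k => hLconn (N + 1 + k)) ?_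
    intro k
    refine ⟨g (N + 1 + k + 1) u₀, ⟨⟨u₀, 1⟩, ⟨hu₀, by norm_num⟩, hq1 _ u₀⟩, ?_⟩
    have hidx : N + 1 + Order.succ k = N + 1 + k + 1 := by
      rw [Order.succ_eq_add_one]; omega
    rw [hidx]
    exact ⟨⟨u₀, 0⟩, ⟨hu₀, by norm_num⟩, hq0 _ u₀⟩
  have hgmem : ∀ (n : ℕ) (u : T d), u ∈ U → g n u ∈ Gm (⇑F) n '' W := by
    intro n u huU
    obtain ⟨z, rfl⟩ := QuotientAddGroup.mk_surjective u
    exact ⟨z, huU, rfl⟩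
  -- rotU = ⋂ K
  have heq : rotU (⇑F) U = ⋂ N, K N := by
    apply Set.Subset.antisymm
    · rw [hA]
      refine Set.subset_iInter fun N => ?_
      refine (Set.iInter_subset _ (N + 1)).trans (closure_mono ?_)
      rintro x hx
      simp only [Set.mem_iUnion, Set.mem_image, Set.mem_Ici] at hx
      obtain ⟨n, hn, z, hzW, rfl⟩ := hx
      refine Set.mem_iUnion.2 ⟨n - (N + 1), ?_⟩
      rw [(congrArg L (by omega : N + 1 + (n - (N + 1)) = n))]
      exact ⟨⟨tpi d z, 0⟩, ⟨hzW, by norm_num⟩, hq0 n (tpi d z)⟩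
    · intro ρ hρ
      rw [hA]
      refine Set.mem_iInter.2 fun M => ?_
      rw [Metric.mem_closure_iff]
      intro ε hε
      obtain ⟨N, hNM, hNε⟩ : ∃ N : ℕ, M ≤ N ∧ 2 * C / ((N : ℝ) + 1) < ε / 2 := by
        have h1 : Tendsto (fun N : ℕ => 2 * C / ((N : ℝ) + 1)) atTop (𝓝 0) := by
          have := tendsto_one_div_add_atTop_nhds_zero_nat.const_mul (2 * C)
          simpa [mul_one_div, div_eq_mul_inv] using this
        exact ((eventually_ge_atTop M).and (h1.eventually_lt_const (by positivity))).exists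
      have h2 := Set.mem_iInter.1 hρ N
      rcases Metric.mem_closure_iff.1 h2 (ε / 2) (by positivity) with ⟨y, hy, hdy⟩
      rcases Set.mem_iUnion.1 hy with ⟨k, hyk⟩
      obtain ⟨⟨u, t⟩, ⟨huU, ht0, ht1⟩, rfl⟩ := hyk
      set n := N + 1 + k with hn
      obtain ⟨z, hz⟩ := QuotientAddGroup.mk_surjective u
      have hzW : z ∈ W := by
        rw [hW, Set.mem_preimage]
        show QuotientAddGroup.mk z ∈ U
        rw [hz]; exact huU
      refine ⟨Gm (⇑F) n z, Set.mem_biUnion (show M ≤ n by omega) ⟨z, hzW, rfl⟩, ?_⟩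
      have hgu : g n u = Gm (⇑F) n z := by rw [← hz]; rfl
      have hgu' : g (n + 1) u = Gm (⇑F) (n + 1) z := by rw [← hz]; rfl
      have hqdiff : q n (u, t) - Gm (⇑F) n z
          = t • (Gm (⇑F) (n + 1) z - Gm (⇑F) n z) := by
        show (1 - t) • g n u + t • g (n + 1) u - Gm (⇑F) n z = _
        rw [hgu, hgu']
        module
      have hyg : dist (q n (u, t)) (Gm (⇑F) n z) ≤ 2 * C / ((N : ℝ) + 1) := by
        rw [dist_eq_norm, hqdiff, norm_smul, Real.norm_eq_abs, abs_of_nonneg ht0]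
        have hd := Gm_diff_bound F hC0 hC (show 1 ≤ n by omega) z
        calc t * ‖Gm (⇑F) (n + 1) z - Gm (⇑F) n z‖
            ≤ 1 * (2 * C / (n : ℝ)) := by
              apply mul_le_mul ht1 hd (norm_nonneg _) zero_le_one
          _ = 2 * C / (n : ℝ) := one_mul _
          _ ≤ 2 * C / ((N : ℝ) + 1) := by
              apply div_le_div_of_nonneg_left (by linarith) (by positivity)
              exact_mod_cast (show N + 1 ≤ n by omega)
      calc dist ρ (Gm (⇑F) n z)
          ≤ dist ρ (q n (u, t)) + dist (q n (u, t)) (Gm (⇑F) n z) := dist_triangle _ _ _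
        _ < ε / 2 + ε / 2 := add_lt_add_of_lt_of_le hdy (hyg.trans hNε.le)
        _ = ε := by ring
  rw [heq]
  have hKne : ∀ N, (K N).Nonempty := fun N =>
    ⟨g (N + 1) u₀, subset_closure (Set.mem_iUnion.2
      ⟨0, ⟨⟨u₀, 0⟩, ⟨hu₀, by norm_num⟩, hq0 _ u₀⟩⟩)⟩
  refine ⟨?_, ?_⟩
  · exact IsCompact.nonempty_iInter_of_sequence_nonempty_isCompact_isClosed K hKnested hKne
      (hKcompact 0) (fun N => isClosed_closure)
  · exact isPreconnected_iInter_of_nested hKcompact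
      (fun N => (hKconn N).isPreconnected) hKnested
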